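/- Let $G$ be a finite simple graph and let $C_1,C_2$ be a Hochster configuration of $G$: two induced odd cycles with $C_1\cap N_G(C_2)=\emptyset$. Then the monomial $\prod_{t_i\in C_1\cup C_2} t_i$ does not lie in $I(G)^{(|C_1|+|C_2|)/2}$. -/

import Mathlib

open MvPolynomial

/-- The edge ideal of a graph: generated by the monomials `X u * X w` over edges. -/
noncomputable def edgeIdeal (K : Type*) [Field K] {V : Type*} (G : SimpleGraph V) :
    Ideal (MvPolynomial V K) :=
  Ideal.span {m | ∃ u w, G.Adj u w ∧ m = X u * X w}

section Aux

variable {K : Type*} [Field K] {V : Type*} [DecidableEq V] (G : SimpleGraph V)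

/-- Exponent vector of an edge. -/
noncomputable def edgeExp (p : V × V) : V →₀ ℕ := Finsupp.single p.1 1 + Finsupp.single p.2 1

lemma X_mul_X_eq (u w : V) :
    (X u * X w : MvPolynomial V K) = monomial (edgeExp (u, w)) 1 := by
  rw [X, X, monomial_mul, one_mul]; rfl

lemma edgeIdeal_eq :
    edgeIdeal K G = Ideal.span ((fun d => monomial d (1 : K)) ''
      {d | ∃ p : V × V, G.Adj p.1 p.2 ∧ d = edgeExp p}) := by
  unfold edgeIdeal
  congr 1
  ext m
  constructor
  · rintro ⟨u, w, h, rfl⟩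
    exact ⟨edgeExp (u, w), ⟨(u, w), h, rfl⟩, (X_mul_X_eq u w).symm⟩
  · rintro ⟨d, ⟨p, hp, rfl⟩, rfl⟩
    exact ⟨p.1, p.2, hp, (X_mul_X_eq p.1 p.2).symm⟩

lemma edgeIdeal_pow_le (n : ℕ) :
    (edgeIdeal K G) ^ n ≤ Ideal.span ((fun d => monomial d (1 : K)) ''
      {d | ∃ L : List (V × V), L.length = n ∧ (∀ p ∈ L, G.Adj p.1 p.2) ∧
        d = (L.map edgeExp).sum}) := by
  induction n with
  | zero =>
    have h1 : (1 : MvPolynomial V K) ∈ Ideal.span ((fun d => monomial d (1 : K)) ''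
        {d | ∃ L : List (V × V), L.length = 0 ∧ (∀ p ∈ L, G.Adj p.1 p.2) ∧
          d = (L.map edgeExp).sum}) := by
      apply Ideal.subset_span
      exact ⟨0, ⟨[], rfl, by simp, by simp⟩, by simp⟩
    rw [pow_zero, Ideal.one_eq_top]
    exact ((Ideal.eq_top_iff_one _).mpr h1).ge
  | succ n ih =>
    rw [pow_succ]
    calc (edgeIdeal K G) ^ n * edgeIdeal K G
        ≤ Ideal.span ((fun d => monomial d (1 : K)) ''
            {d | ∃ L : List (V × V), L.length = n ∧ (∀ p ∈ L, G.Adj p.1 p.2) ∧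
              d = (L.map edgeExp).sum}) *
          Ideal.span ((fun d => monomial d (1 : K)) ''
            {d | ∃ p : V × V, G.Adj p.1 p.2 ∧ d = edgeExp p}) :=
        Ideal.mul_mono ih (le_of_eq (edgeIdeal_eq G))
      _ ≤ _ := by
        rw [Ideal.span_mul_span']
        apply Ideal.span_mono
        rintro x ⟨a, ⟨d, ⟨L, hL, hadj, rfl⟩, rfl⟩, b, ⟨e, ⟨p, hp, rfl⟩, rfl⟩, rfl⟩
        refine ⟨(L.map edgeExp).sum + edgeExp p,
          ⟨L ++ [p], by simp [hL], ?_, by simp⟩, ?_⟩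
        · intro q hq
          rcases List.mem_append.mp hq with h | h
          · exact hadj q h
          · simp only [List.mem_singleton] at h; subst h; exact hp
        · simp [monomial_mul]

lemma cycle_card_support {u : V} {c : G.Walk u u} (hc : c.IsCycle) :
    c.support.toFinset.card = c.length := by
  have h3 : 3 ≤ c.length := hc.three_le_length
  have htail : c.support.tail.Nodup := hc.support_nodup
  have hlen : c.support.length = c.length + 1 := c.length_support
  have hne : c.support.tail ≠ [] := by
    intro h
    have h0 : c.support.tail.length = 0 := by rw [h]; rfl
    rw [List.length_tail, hlen] at h0
    omega
  have hu : u ∈ c.support.tail := by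
    have h1 : c.support.tail.getLast hne = u := by
      rw [List.getLast_tail, c.getLast_support]
    have := List.getLast_mem hne
    rwa [h1] at this
  have hcons : c.support = u :: c.support.tail := by
    rw [c.support_eq_cons]; rfl
  have : c.support.toFinset = c.support.tail.toFinset := by
    rw [hcons]
    simp only [List.toFinset_cons]
    exact Finset.insert_eq_self.mpr (List.mem_toFinset.mpr hu)
  rw [this, List.toFinset_card_of_nodup htail]
  have := c.length_support
  simp [List.length_tail, this]

end Aux

theorem hochster_configuration_not_mem
    (K : Type*) [Field K] {V : Type*} [DecidableEq V]
    (G : SimpleGraph V) {u w : V}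
    (c₁ : G.Walk u u) (c₂ : G.Walk w w)
    (h₁ : c₁.IsCycle) (h₂ : c₂.IsCycle)
    (ho₁ : Odd c₁.length) (ho₂ : Odd c₂.length)
    (hind₁ : ∀ a b, a ∈ c₁.support → b ∈ c₁.support → G.Adj a b → s(a, b) ∈ c₁.edges)
    (hind₂ : ∀ a b, a ∈ c₂.support → b ∈ c₂.support → G.Adj a b → s(a, b) ∈ c₂.edges)
    (hdisj : ∀ x, x ∈ c₁.support → x ∉ c₂.support)
    (hnadj : ∀ a b, a ∈ c₁.support → b ∈ c₂.support → ¬ G.Adj a b) :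
    (∏ i ∈ c₁.support.toFinset ∪ c₂.support.toFinset, X i) ∉
      (edgeIdeal K G) ^ ((c₁.length + c₂.length) / 2) := by
  intro hmem
  set A := c₁.support.toFinset with hA
  set B := c₂.support.toFinset with hB
  set S := A ∪ B with hS
  set n := (c₁.length + c₂.length) / 2 with hn
  -- basic card facts
  have hAB : Disjoint A B := by
    rw [Finset.disjoint_left]
    intro a ha hb
    exact hdisj a (List.mem_toFinset.mp ha) (List.mem_toFinset.mp hb)
  have hcardA : A.card = c₁.length := cycle_card_support G h₁
  have hcardB : B.card = c₂.length := cycle_card_support G h₂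
  have hcardS : S.card = c₁.length + c₂.length := by
    rw [hS, Finset.card_union_of_disjoint hAB, hcardA, hcardB]
  have heven : Even (c₁.length + c₂.length) := Odd.add_odd ho₁ ho₂
  have h2n : 2 * n = c₁.length + c₂.length := Nat.two_mul_div_two_of_even heven
  -- rewrite the product as a monomial
  set σ0 : V →₀ ℕ := ∑ i ∈ S, Finsupp.single i 1 with hσ0
  have hx : (∏ i ∈ S, (X i : MvPolynomial V K)) = monomial σ0 1 := by
    rw [hσ0, monomial_sum_one]
    exact Finset.prod_congr rfl fun i _ => by rw [← X_pow_eq_monomial, pow_one]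
  -- helper: evaluating σ0
  have sum_single_apply : ∀ (a : V) (T : Finset V),
      (∑ i ∈ T, (Finsupp.single a 1 : V →₀ ℕ) i) = if a ∈ T then 1 else 0 := by
    intro a T
    simp [Finsupp.single_apply, Finset.sum_ite_eq]
  have happ : ∀ j, σ0 j = if j ∈ S then 1 else 0 := by
    intro j
    rw [hσ0, Finset.sum_apply']
    simp [Finsupp.single_apply, Finset.sum_ite_eq']
  -- extract a dominated generator exponent
  have hmem' := edgeIdeal_pow_le G n hmem
  rw [hx] at hmem'
  classical
  have hsupp : σ0 ∈ (monomial σ0 (1 : K)).support := by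
    rw [support_monomial, if_neg one_ne_zero]
    exact Finset.mem_singleton_self σ0
  obtain ⟨d, ⟨L, hLlen, hLadj, hd⟩, hle⟩ :=
    mem_ideal_span_monomial_image.mp hmem' σ0 hsupp
  have hle' : ∀ j, d j ≤ σ0 j := fun j => Finsupp.le_def.mp hle j
  -- apply of list sums
  have list_apply : ∀ (L' : List (V →₀ ℕ)) (j : V),
      L'.sum j = (L'.map fun f => f j).sum := by
    intro L' j
    exact map_list_sum (Finsupp.applyAddHom j) L'
  have finset_apply : ∀ (T : Finset V) (L' : List (V →₀ ℕ)),
      (∑ i ∈ T, L'.sum i) = (L'.map fun f => ∑ i ∈ T, f i).sum := by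
    intro T L'
    induction L' with
    | nil => simp
    | cons x L' ih =>
      simp [List.sum_cons, Finsupp.add_apply, Finset.sum_add_distrib, ih]
  -- every endpoint of every edge of L is in S
  have hend : ∀ p ∈ L, p.1 ∈ S ∧ p.2 ∈ S := by
    intro p hp
    have key : ∀ j, 1 ≤ edgeExp p j → j ∈ S := by
      intro j hj
      have h1 : edgeExp p j ≤ d j := by
        rw [hd, list_apply]
        refine List.le_sum_of_mem ?_
        rw [List.map_map]
        exact List.mem_map_of_mem hp
      have h2 := (h1.trans (hle' j)).trans_eq (happ j)
      by_contra hjS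
      rw [if_neg hjS] at h2
      omega
    constructor
    · refine key p.1 ?_
      simp [edgeExp, Finsupp.add_apply, Finsupp.single_apply]
    · refine key p.2 ?_
      simp [edgeExp, Finsupp.add_apply, Finsupp.single_apply]
  -- sum of edgeExp over a finset
  have exp_sum : ∀ (p : V × V) (T : Finset V),
      (∑ i ∈ T, edgeExp p i) =
        (if p.1 ∈ T then 1 else 0) + (if p.2 ∈ T then 1 else 0) := by
    intro p T
    simp only [edgeExp, Finsupp.add_apply, Finset.sum_add_distrib]
    rw [sum_single_apply, sum_single_apply]
  -- total degree over S of d is 2n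
  have hdegS : (∑ i ∈ S, d i) = 2 * n := by
    rw [hd, finset_apply]
    have : (L.map edgeExp).map (fun f => ∑ i ∈ S, f i) = List.replicate n 2 := by
      rw [List.map_map]
      refine List.eq_replicate_iff.mpr ⟨by simp [hLlen], ?_⟩
      intro b hb
      obtain ⟨p, hp, rfl⟩ := List.mem_map.mp hb
      obtain ⟨hp1, hp2⟩ := hend p hp
      simp [exp_sum, hp1, hp2]
    rw [this, List.sum_replicate]
    simp [mul_comm]
  have hdegσ : (∑ i ∈ S, σ0 i) = 2 * n := by
    have : ∀ i ∈ S, σ0 i = 1 := fun i hi => by rw [happ, if_pos hi]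
    rw [Finset.sum_congr rfl this, Finset.sum_const, smul_eq_mul, mul_one, hcardS, h2n]
  -- d agrees with σ0 on S
  have hall : ∀ i ∈ S, d i = σ0 i := by
    have := (Finset.sum_eq_sum_iff_of_le (fun i _ => hle' i)).mp
      (hdegS.trans hdegσ.symm)
    exact fun i hi => (this i hi)
  -- sum over A is odd
  have hsumA : (∑ i ∈ A, d i) = c₁.length := by
    have h1 : ∀ i ∈ A, d i = 1 := by
      intro i hi
      have hiS : i ∈ S := Finset.mem_union_left _ hi
      rw [hall i hiS, happ, if_pos hiS]
    rw [Finset.sum_congr rfl h1, Finset.sum_const, smul_eq_mul, mul_one, hcardA]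
  -- but sum over A is even
  have hevenA : 2 ∣ (∑ i ∈ A, d i) := by
    rw [hd, finset_apply, List.map_map]
    apply List.dvd_sum
    intro x hx
    obtain ⟨p, hp, rfl⟩ := List.mem_map.mp hx
    simp only [Function.comp_apply]
    have hadjp : G.Adj p.1 p.2 := hLadj p hp
    obtain ⟨hp1, hp2⟩ := hend p hp
    have hiff : p.1 ∈ A ↔ p.2 ∈ A := by
      constructor
      · intro h1
        rcases Finset.mem_union.mp hp2 with h | h
        · exact h
        · exact absurd hadjp (hnadj p.1 p.2 (List.mem_toFinset.mp h1)
            (List.mem_toFinset.mp h))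
      · intro h2
        rcases Finset.mem_union.mp hp1 with h | h
        · exact h
        · exact absurd hadjp.symm (hnadj p.2 p.1 (List.mem_toFinset.mp h2)
            (List.mem_toFinset.mp h))
    rw [exp_sum]
    by_cases h : p.1 ∈ A
    · rw [if_pos h, if_pos (hiff.mp h)]
    · rw [if_neg h, if_neg (fun h' => h (hiff.mpr h'))]
      omega
  rw [hsumA] at hevenA
  rw [Nat.odd_iff] at ho₁
  omega
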